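/- Let X_L be an m×m column-stochastic matrix, π_L an m×m permutation matrix, Y_R an n×n column-stochastic matrix, and π_R an n×n permutation matrix. Set X = X_L ⊗ π_R and Y = π_L ⊗ Y_R (Kronecker products, both mn×mn column-stochastic matrices). Then H(XY) = H(X) + H(Y), where for an N×N column-stochastic matrix T with columns t_ν, H(T) = (1/N) Σ_ν H(t_ν) is the weighted entropy with respect to the uniform distribution. -/

import Mathlib

open Finset

/-- Classical relative entropy `H(u‖v) = Σ_i u_i log(u_i/v_i)`;
the convention `0 · log(0/x) = 0` holds automatically in Lean. -/
noncomputable def relEnt {ι : Type*} [Fintype ι] (u v : ι → ℝ) : ℝ :=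
  ∑ i, u i * Real.log (u i / v i)

/-- Shannon entropy `H(u) = -Σ_i u_i log u_i` (with `0 · log 0 = 0`). -/
noncomputable def shEnt {ι : Type*} [Fintype ι] (u : ι → ℝ) : ℝ :=
  -∑ i, u i * Real.log (u i)

/-- A probability vector: nonnegative entries summing to 1. -/
def IsProbVec {ι : Type*} [Fintype ι] (p : ι → ℝ) : Prop :=
  (∀ i, 0 ≤ p i) ∧ ∑ i, p i = 1

/-- A column-stochastic matrix: nonnegative entries, every column sums to 1. -/
def IsColStochastic {ι : Type*} [Fintype ι] (T : Matrix ι ι ℝ) : Prop :=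
  (∀ i j, 0 ≤ T i j) ∧ ∀ j, ∑ i, T i j = 1

/-- Weighted relative entropy `H_p(A‖B) = Σ_ν p_ν H(a_ν‖b_ν)` over the columns. -/
noncomputable def wRelEnt {ι : Type*} [Fintype ι] (p : ι → ℝ) (A B : Matrix ι ι ℝ) : ℝ :=
  ∑ ν, p ν * relEnt (fun i => A i ν) (fun i => B i ν)

/-- Weighted entropy `H_p(T) = Σ_ν p_ν H(t_ν)` over the columns. -/
noncomputable def wEnt {ι : Type*} [Fintype ι] (p : ι → ℝ) (T : Matrix ι ι ℝ) : ℝ :=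
  ∑ ν, p ν * shEnt (fun i => T i ν)

/-- Uniform-weight entropy `H(T) = (1/N) Σ_ν H(t_ν)` of a square matrix. -/
noncomputable def uEnt {ι : Type*} [Fintype ι] (T : Matrix ι ι ℝ) : ℝ :=
  (Fintype.card ι : ℝ)⁻¹ * ∑ ν, shEnt (fun i => T i ν)

/-- A permutation matrix: a 0-1 matrix with all row and column sums equal to 1. -/
def IsPermMatrix {ι : Type*} [Fintype ι] (π : Matrix ι ι ℝ) : Prop :=
  (∀ i j, π i j = 0 ∨ π i j = 1) ∧ (∀ i, ∑ j, π i j = 1) ∧ (∀ j, ∑ i, π i j = 1)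

/-- Additivity of the uniform-weight entropy: for `X = X_L ⊗ π_R` and
`Y = π_L ⊗ Y_R` with `X_L, Y_R` column-stochastic and `π_L, π_R` permutation
matrices, `H(XY) = H(X) + H(Y)`. -/
lemma mul_log_mul' (a b : ℝ) :
    a * b * Real.log (a * b) = b * (a * Real.log a) + a * (b * Real.log b) := by
  rcases eq_or_ne a 0 with ha | ha
  · simp [ha]
  rcases eq_or_ne b 0 with hb | hb
  · simp [hb]
  rw [Real.log_mul ha hb]; ring

lemma shEnt_kron {ι κ : Type*} [Fintype ι] [Fintype κ] (u : ι → ℝ) (v : κ → ℝ) :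
    shEnt (fun p : ι × κ => u p.1 * v p.2) =
      (∑ j, v j) * shEnt u + (∑ i, u i) * shEnt v := by
  unfold shEnt
  rw [Fintype.sum_prod_type]
  simp_rw [mul_log_mul', Finset.sum_add_distrib, ← Finset.mul_sum, ← Finset.sum_mul]
  rw [← Finset.mul_sum]
  ring

lemma permMatrix_equiv {ι : Type*} [Fintype ι] [DecidableEq ι] {π : Matrix ι ι ℝ}
    (hπ : IsPermMatrix π) : ∃ e : Equiv.Perm ι, ∀ i j, π i j = if i = e j then 1 else 0 := by
  obtain ⟨h01, hrow, hcol⟩ := hπ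
  have key : ∀ j, ∃ i₀, ∀ i, π i j = if i = i₀ then 1 else 0 := by
    intro j
    set s := univ.filter (fun i => π i j = 1) with hs
    have hsum : (s.card : ℝ) = 1 := by
      rw [← hcol j]
      rw [← Finset.sum_subset (Finset.subset_univ s) (by
        intro i _ hi
        rcases h01 i j with h | h
        · exact h
        · exact absurd (Finset.mem_filter.mpr ⟨Finset.mem_univ i, h⟩) hi)]
      rw [Finset.sum_congr rfl (fun i hi => (Finset.mem_filter.mp hi).2)]
      simp
      convert rfl
    have hcard : s.card = 1 := by exact_mod_cast hsum
    obtain ⟨i₀, hi₀⟩ := Finset.card_eq_one.mp hcard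
    refine ⟨i₀, fun i => ?_⟩
    by_cases h : i = i₀
    · subst h
      have : i ∈ s := hi₀ ▸ Finset.mem_singleton_self i
      simp [(Finset.mem_filter.mp this).2]
    · rcases h01 i j with h' | h'
      · simp [h, h']
      · have : i ∈ s := Finset.mem_filter.mpr ⟨Finset.mem_univ i, h'⟩
        rw [hi₀, Finset.mem_singleton] at this
        exact absurd this h
  choose f hf using key
  have hinj : Function.Injective f := by
    intro j1 j2 h
    by_contra hne
    have h1 : π (f j1) j1 = 1 := by rw [hf]; simp
    have h2 : π (f j1) j2 = 1 := by rw [hf, h]; simp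
    have hle : π (f j1) j1 + π (f j1) j2 ≤ ∑ j, π (f j1) j := by
      rw [← Finset.sum_pair hne]
      apply Finset.sum_le_sum_of_subset_of_nonneg (Finset.subset_univ _)
      intro i _ _
      rcases h01 (f j1) i with h' | h' <;> simp [h']
    rw [hrow (f j1), h1, h2] at hle
    linarith
  refine ⟨Equiv.ofBijective f (Finite.injective_iff_bijective.mp hinj), fun i j => ?_⟩
  exact hf j i

lemma shEnt_perm_col {ι : Type*} [Fintype ι] {π : Matrix ι ι ℝ} (hπ : IsPermMatrix π)
    (j : ι) : shEnt (fun i => π i j) = 0 := by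
  unfold shEnt
  rw [neg_eq_zero]
  apply Finset.sum_eq_zero
  intro i _
  rcases hπ.1 i j with h | h <;> simp [h]

lemma colsum_mul {ι : Type*} [Fintype ι] [DecidableEq ι] {A B : Matrix ι ι ℝ}
    (hA : ∀ j, ∑ i, A i j = 1) (hB : ∀ j, ∑ i, B i j = 1) (j : ι) :
    ∑ i, (A * B) i j = 1 := by
  simp_rw [Matrix.mul_apply]
  rw [Finset.sum_comm]
  simp_rw [← Finset.sum_mul, hA, one_mul]
  exact hB j

lemma sum_shEnt_mul_perm {m : ℕ} (A π : Matrix (Fin m) (Fin m) ℝ) (hπ : IsPermMatrix π) :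
    ∑ μ, shEnt (fun i => (A * π) i μ) = ∑ μ, shEnt (fun i => A i μ) := by
  obtain ⟨e, he⟩ := permMatrix_equiv hπ
  have hcol : ∀ i μ, (A * π) i μ = A i (e μ) := by
    intro i μ
    rw [Matrix.mul_apply]
    simp_rw [he]
    simp
  simp_rw [hcol]
  exact Equiv.sum_comp e (fun μ => shEnt (fun i => A i μ))

lemma shEnt_perm_mul {n : ℕ} (π B : Matrix (Fin n) (Fin n) ℝ) (hπ : IsPermMatrix π) (ν : Fin n) :
    shEnt (fun j => (π * B) j ν) = shEnt (fun j => B j ν) := by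
  obtain ⟨e, he⟩ := permMatrix_equiv hπ
  have hcol : ∀ j, (π * B) j ν = B (e.symm j) ν := by
    intro j
    rw [Matrix.mul_apply]
    simp_rw [he]
    have : ∀ k, (if j = e k then (1:ℝ) else 0) * B k ν
        = (if k = e.symm j then (1:ℝ) else 0) * B k ν := by
      intro k
      congr 1
      simp [eq_comm, Equiv.eq_symm_apply, Equiv.apply_eq_iff_eq_symm_apply]
    simp_rw [this]
    simp
  simp_rw [hcol]
  unfold shEnt
  congr 1
  simpa using Equiv.sum_comp e.symm (fun k => B k ν * Real.log (B k ν))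

lemma sum_shEnt_kron {m n : ℕ} (A : Matrix (Fin m) (Fin m) ℝ) (B : Matrix (Fin n) (Fin n) ℝ)
    (hA : ∀ μ, ∑ i, A i μ = 1) (hB : ∀ ν, ∑ j, B j ν = 1) :
    ∑ p : Fin m × Fin n, shEnt (fun q : Fin m × Fin n => Matrix.kroneckerMap (· * ·) A B q p)
      = (n : ℝ) * ∑ μ, shEnt (fun i => A i μ) + (m : ℝ) * ∑ ν, shEnt (fun j => B j ν) := by
  rw [Fintype.sum_prod_type]
  have key : ∀ (μ : Fin m) (ν : Fin n),
      shEnt (fun q : Fin m × Fin n => Matrix.kroneckerMap (· * ·) A B q (μ, ν))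
        = shEnt (fun i => A i μ) + shEnt (fun j => B j ν) := by
    intro μ ν
    have h := shEnt_kron (fun i => A i μ) (fun j => B j ν)
    rw [hA, hB, one_mul, one_mul] at h
    exact h
  simp_rw [key, Finset.sum_add_distrib, Finset.sum_const, Finset.card_univ, Fintype.card_fin,
    nsmul_eq_mul]
  rw [← Finset.mul_sum]

theorem uEnt_mul_kronecker {m n : ℕ}
    (XL : Matrix (Fin m) (Fin m) ℝ) (πL : Matrix (Fin m) (Fin m) ℝ)
    (YR : Matrix (Fin n) (Fin n) ℝ) (πR : Matrix (Fin n) (Fin n) ℝ)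
    (hXL : IsColStochastic XL) (hπL : IsPermMatrix πL)
    (hYR : IsColStochastic YR) (hπR : IsPermMatrix πR) :
    uEnt (Matrix.kroneckerMap (· * ·) XL πR * Matrix.kroneckerMap (· * ·) πL YR) =
      uEnt (Matrix.kroneckerMap (· * ·) XL πR) +
        uEnt (Matrix.kroneckerMap (· * ·) πL YR) := by
  have hmix : Matrix.kroneckerMap (· * ·) XL πR * Matrix.kroneckerMap (· * ·) πL YR
      = Matrix.kroneckerMap (· * ·) (XL * πL) (πR * YR) :=
    (Matrix.mul_kronecker_mul XL πL πR YR).symm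
  rw [hmix]
  unfold uEnt
  rw [sum_shEnt_kron (XL * πL) (πR * YR) (colsum_mul hXL.2 hπL.2.2) (colsum_mul hπR.2.2 hYR.2),
    sum_shEnt_kron XL πR hXL.2 hπR.2.2, sum_shEnt_kron πL YR hπL.2.2 hYR.2,
    sum_shEnt_mul_perm XL πL hπL]
  have h1 : ∀ ν : Fin n, shEnt (fun j => (πR * YR) j ν) = shEnt (fun j => YR j ν) :=
    shEnt_perm_mul πR YR hπR
  simp_rw [h1]
  have h2 : ∑ ν, shEnt (fun j => πR j ν) = 0 :=
    Finset.sum_eq_zero fun ν _ => shEnt_perm_col hπR ν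
  have h3 : ∑ μ, shEnt (fun i => πL i μ) = 0 :=
    Finset.sum_eq_zero fun μ _ => shEnt_perm_col hπL μ
  rw [h2, h3]
  ring
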